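/- For the canonical action of the T-version forest-skein group G^T on the totally ordered set X of marked-leaf classes, the induced action on the set X_k of k-element subsets of X is transitive for every k ≥ 1. -/

import Mathlib

namespace ForestSkein

/-- A coloured finite rooted planar binary tree with colours in `S`. -/
inductive CTree (S : Type) : Type
  | leaf : CTree S
  | node : S → CTree S → CTree S → CTree S

namespace CTree

/-- Number of leaves of a coloured binary tree. -/
def leaves {S : Type} : CTree S → ℕ
  | .leaf => 1
  | .node _ l r => leaves l + leaves r

/-- Graft a list of trees onto the leaves of a tree (vertical stacking). -/
def graft {S : Type} : CTree S → List (CTree S) → CTree S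
  | .leaf, gs => gs.headD .leaf
  | .node c l r, gs => .node c (graft l (gs.take (leaves l))) (graft r (gs.drop (leaves l)))

/-- Relabel the colours of a tree along a map of colour sets. -/
def recolour {S S' : Type} (c : S → S') : CTree S → CTree S'
  | .leaf => .leaf
  | .node x l r => .node (c x) (recolour c l) (recolour c r)

end CTree

/-- A coloured forest: a finite list of coloured binary trees.  Its roots are the
entries of the list, its leaves are the leaves of its trees. -/
abbrev Forest (S : Type) := List (CTree S)

/-- Total number of leaves of a forest. -/
def Forest.leaves {S : Type} (f : Forest S) : ℕ := (f.map CTree.leaves).sum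

/-- Composition of forests: `Forest.comp f g` stacks `g` on top of `f`, attaching
the `j`-th root of `g` to the `j`-th leaf of `f` (meaningful when
`Forest.leaves f = g.length`). -/
def Forest.comp {S : Type} : Forest S → Forest S → Forest S
  | [], _ => []
  | t :: ts, g =>
      CTree.graft t (g.take (CTree.leaves t)) :: Forest.comp ts (g.drop (CTree.leaves t))

/-- The elementary forest `a_{j,n}` (1-indexed) with `n` roots, a single `a`-coloured
caret at the `j`-th root, and all other trees trivial. -/
def elemForest {S : Type} (a : S) (j n : ℕ) : Forest S :=
  List.replicate (j - 1) CTree.leaf ++ [CTree.node a CTree.leaf CTree.leaf] ++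
    List.replicate (n - j) CTree.leaf

/-- A set of skein relations consists of pairs of trees with equal numbers of leaves. -/
def LeafPres {S : Type} (R : CTree S → CTree S → Prop) : Prop :=
  ∀ t t' : CTree S, R t t' → CTree.leaves t = CTree.leaves t'

/-- The equivalence relation on coloured forests generated by a set `R` of skein
relations (pairs of trees), closed under composition and tensor product
(horizontal juxtaposition).  The quotient is the forest-skein category
presented by `R`. -/
inductive SkeinEquiv {S : Type} (R : CTree S → CTree S → Prop) : Forest S → Forest S → Prop
  | of {t t' : CTree S} : R t t' → SkeinEquiv R [t] [t']
  | refl (f : Forest S) : SkeinEquiv R f f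
  | symm {f g : Forest S} : SkeinEquiv R f g → SkeinEquiv R g f
  | trans {f g h : Forest S} : SkeinEquiv R f g → SkeinEquiv R g h → SkeinEquiv R f h
  | comp {f f' g g' : Forest S} :
      SkeinEquiv R f f' → SkeinEquiv R g g' → SkeinEquiv R (Forest.comp f g) (Forest.comp f' g')
  | tensor {f f' g g' : Forest S} :
      SkeinEquiv R f f' → SkeinEquiv R g g' → SkeinEquiv R (f ++ g) (f' ++ g')

/-- Left-cancellativity of a forest-skein category given by the equivalence `E` on
forests: `f ∘ g = f ∘ h` implies `g = h`. -/
def LeftCancel {S : Type} (E : Forest S → Forest S → Prop) : Prop :=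
  ∀ f g h : Forest S, Forest.leaves f = g.length → Forest.leaves f = h.length →
    E (Forest.comp f g) (Forest.comp f h) → E g h

/-- Ore's property for the forest-skein category given by the equivalence `E`:
any two forests with the same number of roots admit a common right multiple. -/
def OreProp {S : Type} (E : Forest S → Forest S → Prop) : Prop :=
  ∀ f g : Forest S, f.length = g.length →
    ∃ p q : Forest S, Forest.leaves f = p.length ∧ Forest.leaves g = q.length ∧
      E (Forest.comp f p) (Forest.comp g q)

/-- Equality of the fractions `t ∘ s⁻¹` and `t' ∘ s'⁻¹` in the fraction group:
there are forests `f, f'` with `t ∘ f = t' ∘ f'` and `s ∘ f = s' ∘ f'` modulo `E`. -/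
def FracRel {S : Type} (E : Forest S → Forest S → Prop) (t s t' s' : CTree S) : Prop :=
  ∃ f f' : Forest S, CTree.leaves t = f.length ∧ CTree.leaves t' = f'.length ∧
    E [CTree.graft t f] [CTree.graft t' f'] ∧ E [CTree.graft s f] [CTree.graft s' f']

/-- `leafPos f j` is the (0-indexed) index `j^f` of the first leaf of the `j`-th tree
of the forest `f` among all leaves of `f`. -/
def leafPos {S : Type} (f : Forest S) (j : ℕ) : ℕ := Forest.leaves (f.take j)

/-- Generating relation for the set `X` of marked-leaf classes `[t, j]`:
skein equivalence of the underlying trees, and growth `(t, j) ~ (t ∘ f, j^f)`. -/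
inductive MLRel {S : Type} (E : Forest S → Forest S → Prop) :
    CTree S × ℕ → CTree S × ℕ → Prop
  | skein {t t' : CTree S} {j : ℕ} : E [t] [t'] → MLRel E (t, j) (t', j)
  | grow (t : CTree S) (f : Forest S) (j : ℕ) (hf : CTree.leaves t = f.length) :
      MLRel E (t, j) (CTree.graft t f, leafPos f j)

/-- Equality of marked-leaf classes in `X`. -/
def MLEquiv {S : Type} (E : Forest S → Forest S → Prop) :
    CTree S × ℕ → CTree S × ℕ → Prop :=
  Relation.EqvGen (MLRel E)

/-- The total order `⪯` on marked leaves: `[t, j] ⪯ [t', j']` when for some pair of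
forests with `t ∘ f = t' ∘ f'` (modulo `E`) one has `j^f ≤ j'^{f'}`. -/
def MLLe {S : Type} (E : Forest S → Forest S → Prop) (p q : CTree S × ℕ) : Prop :=
  ∃ f f' : Forest S, CTree.leaves p.1 = f.length ∧ CTree.leaves q.1 = f'.length ∧
    E [CTree.graft p.1 f] [CTree.graft q.1 f'] ∧ leafPos f p.2 ≤ leafPos f' q.2

lemma Forest.leaves_append {S : Type} (f g : Forest S) :
    Forest.leaves (f ++ g) = Forest.leaves f + Forest.leaves g := by
  simp [Forest.leaves]

lemma CTree.one_le_leaves {S : Type} (t : CTree S) : 1 ≤ t.leaves := by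
  induction t with
  | leaf => simp [CTree.leaves]
  | node c l r ihl ihr => simp only [CTree.leaves]; omega

lemma leaves_graft {S : Type} : ∀ (t : CTree S) (gs : Forest S),
    t.leaves = gs.length → (t.graft gs).leaves = Forest.leaves gs := by
  intro t
  induction t with
  | leaf =>
    intro gs h
    simp only [CTree.leaves] at h
    match gs, h.symm with
    | [x], _ => simp [CTree.graft, Forest.leaves]
  | node c l r ihl ihr =>
    intro gs h
    simp only [CTree.leaves] at h
    have hl : l.leaves = (gs.take l.leaves).length := by
      rw [List.length_take]; omega
    have hr : r.leaves = (gs.drop l.leaves).length := by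
      rw [List.length_drop]; omega
    have := Forest.leaves_append (gs.take l.leaves) (gs.drop l.leaves)
    rw [List.take_append_drop] at this
    simp only [CTree.graft, CTree.leaves, ihl _ hl, ihr _ hr]
    omega

lemma leaves_of_empty {S : Type} (hS : IsEmpty S) (t : CTree S) : t.leaves = 1 := by
  cases t with
  | leaf => rfl
  | node c l r => exact (hS.false c).elim

def comb {S : Type} (a : S) : ℕ → CTree S
  | 0 => .leaf
  | 1 => .leaf
  | (m+2) => .node a .leaf (comb a (m+1))

lemma leaves_comb {S : Type} (a : S) : ∀ m, 1 ≤ m → (comb a m).leaves = m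
  | 1, _ => rfl
  | (m+2), _ => by
      have := leaves_comb a (m+1) (by omega)
      simp only [comb, CTree.leaves] at *
      omega

def extraF (J : ℕ → ℕ) (k M n m : ℕ) : ℕ :=
  if m + 1 < k then M - (J (m+1) - J m) else (M + J m) - n - J 0

def PF (J : ℕ → ℕ) (k M n x : ℕ) : ℕ :=
  x + ∑ m ∈ Finset.range k, if J m < x then extraF J k M n m else 0

lemma sumE {J : ℕ → ℕ} {k M n : ℕ}
    (hmono : ∀ m m', m < m' → m' < k → J m < J m') (hb : ∀ m, m < k → J m < n)
    (hM : n ≤ M) :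
    ∀ i, i < k → (∑ m ∈ Finset.range i, extraF J k M n m) + J i = i * M + J 0 := by
  intro i
  induction i with
  | zero => simp
  | succ i ih =>
    intro hi
    have h1 := ih (by omega)
    have he : extraF J k M n i = M - (J (i+1) - J i) := if_pos (by omega)
    have h2 : J i < J (i+1) := hmono i (i+1) (by omega) hi
    have h3 : J (i+1) < n := hb _ hi
    rw [Finset.sum_range_succ, he]
    have h5 : (i+1) * M = i * M + M := by ring
    omega

lemma Pval {J : ℕ → ℕ} {k M n : ℕ}
    (hmono : ∀ m m', m < m' → m' < k → J m < J m') (hb : ∀ m, m < k → J m < n)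
    (hM : n ≤ M) (i : ℕ) (hi : i < k) : PF J k M n (J i) = J 0 + i * M := by
  have hsub : Finset.range i ⊆ Finset.range k := Finset.range_subset_range.2 (by omega)
  have h1 : ∑ m ∈ Finset.range i, (if J m < J i then extraF J k M n m else 0)
      = ∑ m ∈ Finset.range k, (if J m < J i then extraF J k M n m else 0) := by
    refine Finset.sum_subset hsub ?_
    intro m hm hnm
    simp only [Finset.mem_range] at hm hnm
    have : ¬ J m < J i := by
      rcases Nat.lt_or_ge m i with h | h
      · omega
      · rcases Nat.eq_or_lt_of_le h with rfl | h'
        · omega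
        · have := hmono i m h' hm; omega
    exact if_neg this
  have h2 : ∑ m ∈ Finset.range i, (if J m < J i then extraF J k M n m else 0)
      = ∑ m ∈ Finset.range i, extraF J k M n m := by
    refine Finset.sum_congr rfl ?_
    intro m hm
    simp only [Finset.mem_range] at hm
    exact if_pos (hmono m i hm hi)
  have h3 := sumE hmono hb hM i hi
  rw [PF, ← h1, h2]
  omega

lemma Ptotal {J : ℕ → ℕ} {k M n : ℕ} (hk : 1 ≤ k)
    (hmono : ∀ m m', m < m' → m' < k → J m < J m') (hb : ∀ m, m < k → J m < n)
    (hM : 2 * n ≤ M) : PF J k M n n = k * M := by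
  obtain ⟨k', rfl⟩ : ∃ k', k = k' + 1 := ⟨k - 1, by omega⟩
  have h1 : ∑ m ∈ Finset.range (k'+1), (if J m < n then extraF J (k'+1) M n m else 0)
      = ∑ m ∈ Finset.range (k'+1), extraF J (k'+1) M n m :=
    Finset.sum_congr rfl fun m hm => if_pos (hb m (Finset.mem_range.1 hm))
  have h2 := sumE hmono hb (show n ≤ M by omega) k' (by omega)
  have he : extraF J (k'+1) M n k' = (M + J k') - n - J 0 := if_neg (by omega)
  have h3 : J k' < n := hb _ (by omega)
  have h4 : J 0 < n := hb _ (by omega)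
  rw [PF, h1, Finset.sum_range_succ, he]
  have h6 : (k'+1) * M = k' * M + M := by ring
  omega

lemma Pmono {J : ℕ → ℕ} {k M n : ℕ} (x : ℕ) : PF J k M n x + 1 ≤ PF J k M n (x+1) := by
  rw [PF, PF]
  have h := Finset.sum_le_sum (s := Finset.range k)
    (f := fun m => if J m < x then extraF J k M n m else 0)
    (g := fun m => if J m < x + 1 then extraF J k M n m else 0)
    (fun m _ => by split_ifs <;> omega)
  omega

lemma construct {S : Type} (a : S) (k M n : ℕ) (J : ℕ → ℕ) :
    ∃ f : Forest S, f.length = n ∧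
      ∀ x, x ≤ n → leafPos f x = PF J k M n x := by
  refine ⟨(List.range n).map (fun m => comb a (PF J k M n (m+1) - PF J k M n m)), by simp, ?_⟩
  have hstep : ∀ m, (comb a (PF J k M n (m+1) - PF J k M n m)).leaves
      = PF J k M n (m+1) - PF J k M n m := by
    intro m
    exact leaves_comb a _ (by have := Pmono (J := J) (k := k) (M := M) (n := n) m; omega)
  intro x hx
  rw [leafPos, ← List.map_take, List.take_range, min_eq_left hx]
  clear hx
  induction x with
  | zero => simp [Forest.leaves, PF]
  | succ x ih =>
    rw [List.range_succ, List.map_append, Forest.leaves_append, ih]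
    have := Pmono (J := J) (k := k) (M := M) (n := n) x
    simp only [List.map_cons, List.map_nil, Forest.leaves, List.map, List.sum_cons,
      List.sum_nil, hstep]
    omega


theorem GT_transitive_on_subsets' {S : Type} :
    ∀ k : ℕ, 1 ≤ k → ∀ (t t' : CTree S) (j j' : Fin k → ℕ),
      StrictMono j → StrictMono j' →
      (∀ i, j i < CTree.leaves t) → (∀ i, j' i < CTree.leaves t') →
      ∃ (f f' : Forest S) (c : ℕ),
        CTree.leaves t = f.length ∧ CTree.leaves t' = f'.length ∧
        CTree.leaves (CTree.graft t f) = CTree.leaves (CTree.graft t' f') ∧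
        ∀ i : Fin k,
          (leafPos f (j i) + c) % CTree.leaves (CTree.graft t f) = leafPos f' (j' i) := by
  intro k hk t t' j j' hj hj' hjt hjt'
  obtain hS | hNe := isEmpty_or_nonempty S
  · -- no colours: every tree has one leaf
    have ht : t.leaves = 1 := leaves_of_empty hS t
    have ht' : t'.leaves = 1 := leaves_of_empty hS t'
    refine ⟨[CTree.leaf], [CTree.leaf], 0, by simp [ht], by simp [ht'], ?_, ?_⟩
    · rw [leaves_graft t _ (by simp [ht]), leaves_graft t' _ (by simp [ht'])]
    · intro i
      have h1 : j i = 0 := by have := hjt i; omega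
      have h2 : j' i = 0 := by have := hjt' i; omega
      rw [leaves_graft t _ (by simp [ht]), h1, h2]
      simp [leafPos, Forest.leaves]
  · obtain ⟨a⟩ := hNe
    set n := t.leaves with hn
    set n' := t'.leaves with hn'
    set M := 2 * (n + n') with hM
    have hk1 : k - 1 < k := by omega
    set J : ℕ → ℕ := fun m => j ⟨min m (k-1), lt_of_le_of_lt (min_le_right _ _) hk1⟩
      with hJdef
    set J' : ℕ → ℕ := fun m => j' ⟨min m (k-1), lt_of_le_of_lt (min_le_right _ _) hk1⟩
      with hJ'def
    have hJeq : ∀ i : Fin k, J i.val = j i := by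
      intro i
      simp only [hJdef]
      congr 1
      exact Fin.ext (by simp only []; omega)
    have hJ'eq : ∀ i : Fin k, J' i.val = j' i := by
      intro i
      simp only [hJ'def]
      congr 1
      exact Fin.ext (by simp only []; omega)
    have hmono : ∀ m m', m < m' → m' < k → J m < J m' := by
      intro m m' h hm'
      simp only [hJdef]
      exact hj (show (⟨min m (k-1), _⟩ : Fin k) < ⟨min m' (k-1), _⟩ from by
        simp only [Fin.mk_lt_mk]; omega)
    have hmono' : ∀ m m', m < m' → m' < k → J' m < J' m' := by
      intro m m' h hm'
      simp only [hJ'def]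
      exact hj' (show (⟨min m (k-1), _⟩ : Fin k) < ⟨min m' (k-1), _⟩ from by
        simp only [Fin.mk_lt_mk]; omega)
    have hb : ∀ m, m < k → J m < n := fun m _ => hjt _
    have hb' : ∀ m, m < k → J' m < n' := fun m _ => hjt' _
    have hn1 : 1 ≤ n := t.one_le_leaves
    have hn'1 : 1 ≤ n' := t'.one_le_leaves
    obtain ⟨f, hflen, hfpos⟩ := construct (S := S) a k M n J
    obtain ⟨f', hf'len, hf'pos⟩ := construct (S := S) a k M n' J'
    have hftot : Forest.leaves f = k * M := by
      have := hfpos n le_rfl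
      rw [leafPos, List.take_of_length_le (le_of_eq hflen)] at this
      rw [this]
      exact Ptotal hk hmono hb (by omega)
    have hf'tot : Forest.leaves f' = k * M := by
      have := hf'pos n' le_rfl
      rw [leafPos, List.take_of_length_le (le_of_eq hf'len)] at this
      rw [this]
      exact Ptotal hk hmono' hb' (by omega)
    have hg : (t.graft f).leaves = k * M := by
      rw [leaves_graft t f (by rw [hflen]), hftot]
    have hg' : (t'.graft f').leaves = k * M := by
      rw [leaves_graft t' f' (by rw [hf'len]), hf'tot]
    have hpos : ∀ i : Fin k, leafPos f (j i) = J 0 + i.val * M := by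
      intro i
      rw [← hJeq i, hfpos _ (le_of_lt (hb _ i.isLt))]
      exact Pval hmono hb (by omega) i.val i.isLt
    have hpos' : ∀ i : Fin k, leafPos f' (j' i) = J' 0 + i.val * M := by
      intro i
      rw [← hJ'eq i, hf'pos _ (le_of_lt (hb' _ i.isLt))]
      exact Pval hmono' hb' (by omega) i.val i.isLt
    refine ⟨f, f', if J 0 ≤ J' 0 then J' 0 - J 0 else k * M - (J 0 - J' 0),
      hflen.symm, hf'len.symm, by rw [hg, hg'], ?_⟩
    intro i
    rw [hg, hpos i, hpos' i]
    have hA : i.val * M + M ≤ k * M := by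
      have h := Nat.mul_le_mul_right M (show i.val + 1 ≤ k from i.isLt)
      calc i.val * M + M = (i.val + 1) * M := by ring
        _ ≤ k * M := h
    have hJ0 : J 0 < n := hb 0 (by omega)
    have hJ'0 : J' 0 < n' := hb' 0 (by omega)
    have hMn : n + n' ≤ M := by omega
    split_ifs with hc
    · rw [show J 0 + i.val * M + (J' 0 - J 0) = J' 0 + i.val * M by omega]
      exact Nat.mod_eq_of_lt (by omega)
    · rw [show J 0 + i.val * M + (k * M - (J 0 - J' 0)) = k * M + (J' 0 + i.val * M) by omega,
        Nat.add_mod_left]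
      exact Nat.mod_eq_of_lt (by omega)


/-- the action of the `T`-version forest-skein group `G^T` on the set
`X_k` of `k`-element subsets of `X` is transitive for every `k ≥ 1`: any two
`k`-tuples of marked leaves `{[t, j_1] < ⋯ < [t, j_k]}` and
`{[t', j'_1] < ⋯ < [t', j'_k]}` are matched by an element
`(t' ∘ f') ∘ σ ∘ (t ∘ f)⁻¹` of `G^T` with `σ` a cyclic rotation. -/
theorem GT_transitive_on_subsets {S : Type} (R : CTree S → CTree S → Prop)
    (hR : LeafPres R)
    (hLC : LeftCancel (SkeinEquiv R)) (hOre : OreProp (SkeinEquiv R)) :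
    ∀ k : ℕ, 1 ≤ k → ∀ (t t' : CTree S) (j j' : Fin k → ℕ),
      StrictMono j → StrictMono j' →
      (∀ i, j i < CTree.leaves t) → (∀ i, j' i < CTree.leaves t') →
      ∃ (f f' : Forest S) (c : ℕ),
        CTree.leaves t = f.length ∧ CTree.leaves t' = f'.length ∧
        CTree.leaves (CTree.graft t f) = CTree.leaves (CTree.graft t' f') ∧
        ∀ i : Fin k,
          (leafPos f (j i) + c) % CTree.leaves (CTree.graft t f) = leafPos f' (j' i) :=
  GT_transitive_on_subsets'

end ForestSkein
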